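/- Let F: S → ℝ^{m×p} be differentiable on an open subset S of ℝ^{n×q} with rank(F(X)) constant on S. Then the Fréchet differential of the Moore–Penrose inverse satisfies dF† = -F† dF F† + F† F†^T dF^T (I_m - FF†) + (I_p - F†F) dF^T F†^T F†. -/

import Mathlib

open Matrix
open scoped Matrix.Norms.L2Operator

/-- `Cd` is the Moore–Penrose inverse of `C` (the four Penrose equations). -/
def IsMoorePenrose {m n : Type*} [Fintype m] [Fintype n]
    (C : Matrix m n ℝ) (Cd : Matrix n m ℝ) : Prop :=
  C * Cd * C = C ∧ Cd * C * Cd = Cd ∧ (C * Cd)ᵀ = C * Cd ∧ (Cd * C)ᵀ = Cd * C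

namespace PinvAux

variable {m p : ℕ}

lemma ct_eq (A : Matrix (Fin m) (Fin p) ℝ) : Aᴴ = Aᵀ := by
  simp [conjTranspose, Matrix.transpose_map]; rfl

lemma norm_transpose (A : Matrix (Fin m) (Fin p) ℝ) : ‖Aᵀ‖ = ‖A‖ := by
  rw [← ct_eq]; exact l2_opNorm_conjTranspose A

lemma proj_norm_le {k : ℕ} (P : Matrix (Fin k) (Fin k) ℝ) (hs : Pᵀ = P) (hi : P * P = P) :
    ‖P‖ ≤ 1 := by
  have h := l2_opNorm_conjTranspose_mul_self P
  rw [ct_eq, hs, hi] at h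
  nlinarith [norm_nonneg P]

lemma opn3 {a b c d : ℕ} (X : Matrix (Fin a) (Fin b) ℝ) (Y : Matrix (Fin b) (Fin c) ℝ)
    (Z : Matrix (Fin c) (Fin d) ℝ) : ‖X * Y * Z‖ ≤ ‖X‖ * ‖Y‖ * ‖Z‖ :=
  le_trans (l2_opNorm_mul _ _) (mul_le_mul_of_nonneg_right (l2_opNorm_mul _ _) (norm_nonneg _))

lemma opn4 {a b c d e : ℕ} (X : Matrix (Fin a) (Fin b) ℝ) (Y : Matrix (Fin b) (Fin c) ℝ)
    (Z : Matrix (Fin c) (Fin d) ℝ) (U : Matrix (Fin d) (Fin e) ℝ) :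
    ‖X * Y * Z * U‖ ≤ ‖X‖ * ‖Y‖ * ‖Z‖ * ‖U‖ :=
  le_trans (l2_opNorm_mul _ _) (mul_le_mul_of_nonneg_right (opn3 _ _ _) (norm_nonneg _))

lemma proj_one_sub_left (A : Matrix (Fin m) (Fin p) ℝ) (Ad : Matrix (Fin p) (Fin m) ℝ)
    (h1 : A * Ad * A = A) (h3 : (A * Ad)ᵀ = A * Ad) : ‖1 - A * Ad‖ ≤ 1 := by
  apply proj_norm_le
  · rw [transpose_sub, transpose_one, h3]
  · have hPP : (A * Ad) * (A * Ad) = A * Ad := by rw [← Matrix.mul_assoc, h1]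
    rw [Matrix.mul_sub, Matrix.mul_one, Matrix.sub_mul, Matrix.one_mul, hPP]
    abel
lemma proj_one_sub_right (A : Matrix (Fin m) (Fin p) ℝ) (Ad : Matrix (Fin p) (Fin m) ℝ)
    (h2 : Ad * A * Ad = Ad) (h4 : (Ad * A)ᵀ = Ad * A) : ‖1 - Ad * A‖ ≤ 1 := by
  apply proj_norm_le
  · rw [transpose_sub, transpose_one, h4]
  · have hPP : (Ad * A) * (Ad * A) = Ad * A := by rw [← Matrix.mul_assoc, h2]
    rw [Matrix.mul_sub, Matrix.mul_one, Matrix.sub_mul, Matrix.one_mul, hPP]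
    abel

lemma wedin (A B : Matrix (Fin m) (Fin p) ℝ) (Ad Bd : Matrix (Fin p) (Fin m) ℝ)
    (hA : IsMoorePenrose A Ad) (hB : IsMoorePenrose B Bd) :
    Bd - Ad = -(Bd * (B - A) * Ad) + Bd * Bdᵀ * (B - A)ᵀ * (1 - A * Ad)
      + (1 - Bd * B) * (B - A)ᵀ * Adᵀ * Ad := by
  obtain ⟨hA1, hA2, hA3, hA4⟩ := hA
  obtain ⟨hB1, hB2, hB3, hB4⟩ := hB
  have h1 : Bd * Bdᵀ * Bᵀ = Bd := by
    calc Bd * Bdᵀ * Bᵀ = Bd * (B * Bd)ᵀ := by rw [Matrix.mul_assoc, ← transpose_mul]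
    _ = Bd * (B * Bd) := by rw [hB3]
    _ = Bd := by rw [← Matrix.mul_assoc, hB2]
  have h2 : Aᵀ * (A * Ad) = Aᵀ := by
    calc Aᵀ * (A * Ad) = Aᵀ * (A * Ad)ᵀ := by rw [hA3]
    _ = (A * Ad * A)ᵀ := by rw [← transpose_mul]
    _ = Aᵀ := by rw [hA1]
  have h3 : Bd * B * Bᵀ = Bᵀ := by
    calc Bd * B * Bᵀ = (Bd * B)ᵀ * Bᵀ := by rw [hB4]
    _ = (B * (Bd * B))ᵀ := by rw [← transpose_mul]
    _ = Bᵀ := by rw [← Matrix.mul_assoc, hB1]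
  have h4 : Aᵀ * Adᵀ * Ad = Ad := by
    calc Aᵀ * Adᵀ * Ad = (Ad * A)ᵀ * Ad := by rw [transpose_mul]
    _ = Ad * A * Ad := by rw [hA4]
    _ = Ad := hA2
  have e2 : Bd * Bdᵀ * (B - A)ᵀ * (1 - A * Ad) = Bd - Bd * (A * Ad) := by
    rw [transpose_sub, Matrix.mul_sub, Matrix.mul_sub, Matrix.sub_mul, Matrix.mul_one,
      Matrix.mul_one, h1, Matrix.sub_mul, Matrix.mul_assoc (Bd * Bdᵀ) Aᵀ, h2]
    abel
  have e3 : (1 - Bd * B) * (B - A)ᵀ * Adᵀ * Ad = Bd * B * Ad - Ad := by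
    rw [transpose_sub, Matrix.sub_mul, Matrix.one_mul, Matrix.mul_sub, Matrix.sub_mul,
      Matrix.sub_mul, Matrix.sub_mul, Matrix.sub_mul, Matrix.sub_mul,
      Matrix.mul_assoc Bᵀ Adᵀ Ad, ← Matrix.mul_assoc Bᵀ Adᵀ Ad, h4, h3,
      Matrix.mul_assoc (Bd * B) Aᵀ Adᵀ, Matrix.sub_mul,
      Matrix.mul_assoc (Bd * B) (Aᵀ * Adᵀ) Ad, h4]
    abel
  have e1 : -(Bd * (B - A) * Ad) = Bd * (A * Ad) - Bd * B * Ad := by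
    rw [Matrix.mul_sub, Matrix.sub_mul, Matrix.mul_assoc Bd A]
    abel
  rw [e1, e2, e3]
  abel

/-- Lipschitz-type bound from Wedin's identity. -/
lemma wedin_lip (A B : Matrix (Fin m) (Fin p) ℝ) (Ad Bd : Matrix (Fin p) (Fin m) ℝ)
    (hA : IsMoorePenrose A Ad) (hB : IsMoorePenrose B Bd) :
    ‖Bd - Ad‖ ≤ (‖Bd‖ * ‖Ad‖ + ‖Bd‖ * ‖Bd‖ + ‖Ad‖ * ‖Ad‖) * ‖B - A‖ := by
  obtain ⟨hA1, hA2, hA3, hA4⟩ := id hA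
  obtain ⟨hB1, hB2, hB3, hB4⟩ := id hB
  rw [wedin A B Ad Bd hA hB]
  have t1 : ‖-(Bd * (B - A) * Ad)‖ ≤ ‖Bd‖ * ‖B - A‖ * ‖Ad‖ := by
    rw [norm_neg]; exact opn3 _ _ _
  have t2 : ‖Bd * Bdᵀ * (B - A)ᵀ * (1 - A * Ad)‖ ≤ ‖Bd‖ * ‖Bd‖ * ‖B - A‖ * 1 := by
    calc ‖Bd * Bdᵀ * (B - A)ᵀ * (1 - A * Ad)‖ ≤ ‖Bd‖ * ‖Bdᵀ‖ * ‖(B - A)ᵀ‖ * ‖1 - A * Ad‖ :=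
      opn4 _ _ _ _
    _ ≤ ‖Bd‖ * ‖Bd‖ * ‖B - A‖ * 1 := by
        rw [norm_transpose, norm_transpose]
        exact mul_le_mul_of_nonneg_left (proj_one_sub_left A Ad hA1 hA3)
          (by positivity)
  have t3 : ‖(1 - Bd * B) * (B - A)ᵀ * Adᵀ * Ad‖ ≤ 1 * ‖B - A‖ * ‖Ad‖ * ‖Ad‖ := by
    calc ‖(1 - Bd * B) * (B - A)ᵀ * Adᵀ * Ad‖ ≤ ‖1 - Bd * B‖ * ‖(B - A)ᵀ‖ * ‖Adᵀ‖ * ‖Ad‖ :=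
      opn4 _ _ _ _
    _ ≤ 1 * ‖B - A‖ * ‖Ad‖ * ‖Ad‖ := by
        rw [norm_transpose, norm_transpose]
        have := proj_one_sub_right B Bd hB2 hB4
        gcongr
  calc ‖-(Bd * (B - A) * Ad) + Bd * Bdᵀ * (B - A)ᵀ * (1 - A * Ad)
        + (1 - Bd * B) * (B - A)ᵀ * Adᵀ * Ad‖
      ≤ ‖-(Bd * (B - A) * Ad) + Bd * Bdᵀ * (B - A)ᵀ * (1 - A * Ad)‖
        + ‖(1 - Bd * B) * (B - A)ᵀ * Adᵀ * Ad‖ := norm_add_le _ _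
  _ ≤ ‖-(Bd * (B - A) * Ad)‖ + ‖Bd * Bdᵀ * (B - A)ᵀ * (1 - A * Ad)‖
        + ‖(1 - Bd * B) * (B - A)ᵀ * Adᵀ * Ad‖ := by
      have := norm_add_le (-(Bd * (B - A) * Ad)) (Bd * Bdᵀ * (B - A)ᵀ * (1 - A * Ad))
      linarith
  _ ≤ (‖Bd‖ * ‖Ad‖ + ‖Bd‖ * ‖Bd‖ + ‖Ad‖ * ‖Ad‖) * ‖B - A‖ := by nlinarith [norm_nonneg (B - A)]

set_option maxHeartbeats 1000000 in
/-- second-order bound for the Wedin remainder -/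
lemma wedin_sq_bound (A B : Matrix (Fin m) (Fin p) ℝ) (Ad Bd : Matrix (Fin p) (Fin m) ℝ)
    (hA : IsMoorePenrose A Ad) (hB : IsMoorePenrose B Bd) (hBd : ‖Bd‖ ≤ 2 * ‖Ad‖) :
    ‖Bd - Ad - (-(Ad * (B - A) * Ad) + Ad * Adᵀ * (B - A)ᵀ * (1 - A * Ad)
      + (1 - Ad * A) * (B - A)ᵀ * Adᵀ * Ad)‖
    ≤ (30 * ‖Ad‖ ^ 3 + 7 * ‖Ad‖ ^ 4 * ‖A‖) * (‖B - A‖ * ‖B - A‖) := by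
  obtain ⟨hA1, hA2, hA3, hA4⟩ := id hA
  obtain ⟨hB1, hB2, hB3, hB4⟩ := id hB
  have hα0 : (0:ℝ) ≤ ‖Ad‖ := norm_nonneg _
  have hε0 : (0:ℝ) ≤ ‖B - A‖ := norm_nonneg _
  have hco : ‖Bd‖ * ‖Ad‖ + ‖Bd‖ * ‖Bd‖ + ‖Ad‖ * ‖Ad‖ ≤ 7 * ‖Ad‖ ^ 2 := by
    nlinarith [norm_nonneg Bd]
  have hlip : ‖Bd - Ad‖ ≤ 7 * ‖Ad‖ ^ 2 * ‖B - A‖ :=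
    le_trans (wedin_lip A B Ad Bd hA hB) (mul_le_mul_of_nonneg_right hco hε0)
  -- the remainder identity
  have hid : (-(Bd * (B - A) * Ad) + Bd * Bdᵀ * (B - A)ᵀ * (1 - A * Ad)
      + (1 - Bd * B) * (B - A)ᵀ * Adᵀ * Ad)
      - (-(Ad * (B - A) * Ad) + Ad * Adᵀ * (B - A)ᵀ * (1 - A * Ad)
      + (1 - Ad * A) * (B - A)ᵀ * Adᵀ * Ad)
      = -((Bd - Ad) * (B - A) * Ad) + (Bd * Bdᵀ - Ad * Adᵀ) * (B - A)ᵀ * (1 - A * Ad)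
        + (Ad * A - Bd * B) * (B - A)ᵀ * Adᵀ * Ad := by
    rw [Matrix.sub_mul Bd Ad (B - A), Matrix.sub_mul (Bd * (B - A)) (Ad * (B - A)) Ad,
      Matrix.sub_mul (Bd * Bdᵀ) (Ad * Adᵀ) ((B - A)ᵀ),
      Matrix.sub_mul (Bd * Bdᵀ * (B - A)ᵀ) (Ad * Adᵀ * (B - A)ᵀ) (1 - A * Ad),
      Matrix.sub_mul (Ad * A) (Bd * B) ((B - A)ᵀ),
      Matrix.sub_mul (Ad * A * (B - A)ᵀ) (Bd * B * (B - A)ᵀ) Adᵀ,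
      Matrix.sub_mul (Ad * A * (B - A)ᵀ * Adᵀ) (Bd * B * (B - A)ᵀ * Adᵀ) Ad,
      Matrix.sub_mul (1 : Matrix (Fin p) (Fin p) ℝ) (Ad * A) ((B - A)ᵀ),
      Matrix.sub_mul (1 : Matrix (Fin p) (Fin p) ℝ) (Bd * B) ((B - A)ᵀ),
      Matrix.sub_mul ((1 : Matrix (Fin p) (Fin p) ℝ) * (B - A)ᵀ) (Ad * A * (B - A)ᵀ) Adᵀ,
      Matrix.sub_mul ((1 : Matrix (Fin p) (Fin p) ℝ) * (B - A)ᵀ) (Bd * B * (B - A)ᵀ) Adᵀ,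
      Matrix.sub_mul ((1 : Matrix (Fin p) (Fin p) ℝ) * (B - A)ᵀ * Adᵀ) (Ad * A * (B - A)ᵀ * Adᵀ) Ad,
      Matrix.sub_mul ((1 : Matrix (Fin p) (Fin p) ℝ) * (B - A)ᵀ * Adᵀ) (Bd * B * (B - A)ᵀ * Adᵀ) Ad]
    abel
  rw [wedin A B Ad Bd hA hB, hid]
  have d1 : ‖-((Bd - Ad) * (B - A) * Ad)‖ ≤ 7 * ‖Ad‖ ^ 3 * (‖B - A‖ * ‖B - A‖) := by
    rw [norm_neg]
    calc ‖(Bd - Ad) * (B - A) * Ad‖ ≤ ‖Bd - Ad‖ * ‖B - A‖ * ‖Ad‖ := opn3 _ _ _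
    _ ≤ (7 * ‖Ad‖ ^ 2 * ‖B - A‖) * ‖B - A‖ * ‖Ad‖ := by gcongr
    _ = 7 * ‖Ad‖ ^ 3 * (‖B - A‖ * ‖B - A‖) := by ring
  have hdd : ‖Bd * Bdᵀ - Ad * Adᵀ‖ ≤ 21 * ‖Ad‖ ^ 3 * ‖B - A‖ := by
    have hidd : Bd * Bdᵀ - Ad * Adᵀ = (Bd - Ad) * Bdᵀ + Ad * (Bd - Ad)ᵀ := by
      rw [Matrix.sub_mul, transpose_sub, Matrix.mul_sub]
      abel
    rw [hidd]
    calc ‖(Bd - Ad) * Bdᵀ + Ad * (Bd - Ad)ᵀ‖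
        ≤ ‖(Bd - Ad) * Bdᵀ‖ + ‖Ad * (Bd - Ad)ᵀ‖ := norm_add_le _ _
    _ ≤ ‖Bd - Ad‖ * ‖Bdᵀ‖ + ‖Ad‖ * ‖(Bd - Ad)ᵀ‖ :=
        add_le_add (l2_opNorm_mul _ _) (l2_opNorm_mul _ _)
    _ ≤ 21 * ‖Ad‖ ^ 3 * ‖B - A‖ := by
        rw [norm_transpose, norm_transpose]
        nlinarith [norm_nonneg (Bd - Ad), norm_nonneg Bd,
          mul_le_mul hlip hBd (norm_nonneg Bd) (by positivity),
          mul_le_mul_of_nonneg_left hlip hα0]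
  have d2 : ‖(Bd * Bdᵀ - Ad * Adᵀ) * (B - A)ᵀ * (1 - A * Ad)‖
      ≤ 21 * ‖Ad‖ ^ 3 * (‖B - A‖ * ‖B - A‖) := by
    calc ‖(Bd * Bdᵀ - Ad * Adᵀ) * (B - A)ᵀ * (1 - A * Ad)‖
        ≤ ‖Bd * Bdᵀ - Ad * Adᵀ‖ * ‖(B - A)ᵀ‖ * ‖1 - A * Ad‖ := opn3 _ _ _
    _ ≤ (21 * ‖Ad‖ ^ 3 * ‖B - A‖) * ‖B - A‖ * 1 := by
        rw [norm_transpose]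
        gcongr
        exact proj_one_sub_left A Ad hA1 hA3
    _ = 21 * ‖Ad‖ ^ 3 * (‖B - A‖ * ‖B - A‖) := by ring
  have hdd3 : ‖Ad * A - Bd * B‖ ≤ 7 * ‖Ad‖ ^ 2 * ‖B - A‖ * ‖A‖ + 2 * ‖Ad‖ * ‖B - A‖ := by
    have hidd : Ad * A - Bd * B = (Ad - Bd) * A + Bd * (A - B) := by
      rw [Matrix.sub_mul, Matrix.mul_sub]
      abel
    rw [hidd]
    calc ‖(Ad - Bd) * A + Bd * (A - B)‖ ≤ ‖(Ad - Bd) * A‖ + ‖Bd * (A - B)‖ := norm_add_le _ _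
    _ ≤ ‖Ad - Bd‖ * ‖A‖ + ‖Bd‖ * ‖A - B‖ :=
        add_le_add (l2_opNorm_mul _ _) (l2_opNorm_mul _ _)
    _ ≤ 7 * ‖Ad‖ ^ 2 * ‖B - A‖ * ‖A‖ + 2 * ‖Ad‖ * ‖B - A‖ := by
        rw [norm_sub_rev Ad Bd, norm_sub_rev A B]
        have hA0 : (0:ℝ) ≤ ‖A‖ := norm_nonneg _
        nlinarith
  have d3 : ‖(Ad * A - Bd * B) * (B - A)ᵀ * Adᵀ * Ad‖
      ≤ (7 * ‖Ad‖ ^ 2 * ‖B - A‖ * ‖A‖ + 2 * ‖Ad‖ * ‖B - A‖) * ‖B - A‖ * ‖Ad‖ * ‖Ad‖ := by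
    calc ‖(Ad * A - Bd * B) * (B - A)ᵀ * Adᵀ * Ad‖
        ≤ ‖Ad * A - Bd * B‖ * ‖(B - A)ᵀ‖ * ‖Adᵀ‖ * ‖Ad‖ := opn4 _ _ _ _
    _ ≤ (7 * ‖Ad‖ ^ 2 * ‖B - A‖ * ‖A‖ + 2 * ‖Ad‖ * ‖B - A‖) * ‖B - A‖ * ‖Ad‖ * ‖Ad‖ := by
        rw [norm_transpose, norm_transpose]
        gcongr
  calc ‖-((Bd - Ad) * (B - A) * Ad) + (Bd * Bdᵀ - Ad * Adᵀ) * (B - A)ᵀ * (1 - A * Ad)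
        + (Ad * A - Bd * B) * (B - A)ᵀ * Adᵀ * Ad‖
      ≤ ‖-((Bd - Ad) * (B - A) * Ad) + (Bd * Bdᵀ - Ad * Adᵀ) * (B - A)ᵀ * (1 - A * Ad)‖
        + ‖(Ad * A - Bd * B) * (B - A)ᵀ * Adᵀ * Ad‖ := norm_add_le _ _
  _ ≤ ‖-((Bd - Ad) * (B - A) * Ad)‖ + ‖(Bd * Bdᵀ - Ad * Adᵀ) * (B - A)ᵀ * (1 - A * Ad)‖
        + ‖(Ad * A - Bd * B) * (B - A)ᵀ * Adᵀ * Ad‖ := by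
      have := norm_add_le (-((Bd - Ad) * (B - A) * Ad))
        ((Bd * Bdᵀ - Ad * Adᵀ) * (B - A)ᵀ * (1 - A * Ad))
      linarith
  _ ≤ (30 * ‖Ad‖ ^ 3 + 7 * ‖Ad‖ ^ 4 * ‖A‖) * (‖B - A‖ * ‖B - A‖) := by
      have e3 : (7 * ‖Ad‖ ^ 2 * ‖B - A‖ * ‖A‖ + 2 * ‖Ad‖ * ‖B - A‖) * ‖B - A‖ * ‖Ad‖ * ‖Ad‖
          = 7 * ‖Ad‖ ^ 4 * ‖A‖ * (‖B - A‖ * ‖B - A‖) + 2 * ‖Ad‖ ^ 3 * (‖B - A‖ * ‖B - A‖) := by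
        ring
      rw [e3] at d3
      have e4 : (30 * ‖Ad‖ ^ 3 + 7 * ‖Ad‖ ^ 4 * ‖A‖) * (‖B - A‖ * ‖B - A‖)
          = 7 * ‖Ad‖ ^ 3 * (‖B - A‖ * ‖B - A‖) + 21 * ‖Ad‖ ^ 3 * (‖B - A‖ * ‖B - A‖)
            + (7 * ‖Ad‖ ^ 4 * ‖A‖ * (‖B - A‖ * ‖B - A‖)
              + 2 * ‖Ad‖ ^ 3 * (‖B - A‖ * ‖B - A‖)) := by ring
      rw [e4]
      exact add_le_add (add_le_add d1 d2) d3

lemma norm_tE_le (A : Matrix (Fin m) (Fin p) ℝ) (x : EuclideanSpace ℝ (Fin p)) :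
    ‖toEuclideanLin A x‖ ≤ ‖A‖ * ‖x‖ := by
  have := ((Matrix.toEuclideanLin (𝕜 := ℝ) (m := Fin m) (n := Fin p)).trans
      LinearMap.toContinuousLinearMap A).le_opNorm x
  simpa [Matrix.l2_opNorm_def] using this

lemma opNorm_le_of (A : Matrix (Fin m) (Fin p) ℝ) {c : ℝ} (hc : 0 ≤ c)
    (h : ∀ x : EuclideanSpace ℝ (Fin p), ‖toEuclideanLin A x‖ ≤ c * ‖x‖) : ‖A‖ ≤ c := by
  rw [Matrix.l2_opNorm_def]
  exact ContinuousLinearMap.opNorm_le_bound _ hc (by simpa using h)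

lemma tE_mul {a b c : ℕ} (A : Matrix (Fin a) (Fin b) ℝ) (B : Matrix (Fin b) (Fin c) ℝ)
    (x : EuclideanSpace ℝ (Fin c)) :
    toEuclideanLin (A * B) x = toEuclideanLin A (toEuclideanLin B x) := by
  rw [toEuclideanLin_eq_toLin, Matrix.toLin_mul _ (PiLp.basisFun 2 ℝ (Fin b)) _]
  rfl

lemma rank_tE (A : Matrix (Fin m) (Fin p) ℝ) :
    A.rank = Module.finrank ℝ (LinearMap.range (toEuclideanLin A)) :=
  Matrix.rank_eq_finrank_range_toLin A (PiLp.basisFun 2 ℝ (Fin m)) (PiLp.basisFun 2 ℝ (Fin p))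

/-- **Key norm bound:** under equal rank and a small perturbation, the Moore-Penrose inverse
of the perturbed matrix is norm-bounded. -/
lemma pinv_norm_bound (A B : Matrix (Fin m) (Fin p) ℝ) (Ad Bd : Matrix (Fin p) (Fin m) ℝ)
    (hA : IsMoorePenrose A Ad) (hB : IsMoorePenrose B Bd)
    (hr : A.rank = B.rank) (hsmall : ‖Ad‖ * ‖B - A‖ < 1) :
    (1 - ‖Ad‖ * ‖B - A‖) * ‖Bd‖ ≤ ‖Ad‖ := by
  obtain ⟨hA1, hA2, hA3, hA4⟩ := hA
  obtain ⟨hB1, hB2, hB3, hB4⟩ := hB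
  set α := ‖Ad‖ with hα
  set ε := ‖B - A‖ with hε
  have hα0 : 0 ≤ α := norm_nonneg _
  have hε0 : 0 ≤ ε := norm_nonneg _
  have hpos : 0 < 1 - α * ε := by linarith
  set a : EuclideanSpace ℝ (Fin p) →ₗ[ℝ] EuclideanSpace ℝ (Fin p) := toEuclideanLin (Ad * A)
    with ha
  set g : EuclideanSpace ℝ (Fin p) →ₗ[ℝ] EuclideanSpace ℝ (Fin p) := toEuclideanLin (Bd * B)
    with hg
  set W := LinearMap.range a with hW
  -- idempotency
  have hida : (Ad * A) * (Ad * A) = Ad * A := by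
    calc (Ad * A) * (Ad * A) = (Ad * A * Ad) * A := by rw [Matrix.mul_assoc (Ad * A) Ad A]
    _ = Ad * A := by rw [hA2]
  have hidb : (Bd * B) * (Bd * B) = Bd * B := by
    calc (Bd * B) * (Bd * B) = (Bd * B * Bd) * B := by rw [Matrix.mul_assoc (Bd * B) Bd B]
    _ = Bd * B := by rw [hB2]
  have hfix : ∀ y ∈ W, a y = y := by
    rintro y ⟨z, rfl⟩
    rw [ha, ← tE_mul, hida]
  -- for fixed points of a, ‖y‖ ≤ α * ‖A y‖
  have hAy : ∀ y : EuclideanSpace ℝ (Fin p), a y = y → ‖y‖ ≤ α * ‖toEuclideanLin A y‖ := by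
    intro y hy
    have : y = toEuclideanLin Ad (toEuclideanLin A y) := by rw [← tE_mul, ← ha, hy]
    calc ‖y‖ = ‖toEuclideanLin Ad (toEuclideanLin A y)‖ := by rw [← this]
    _ ≤ α * ‖toEuclideanLin A y‖ := norm_tE_le _ _
  -- injectivity of g on W
  have hinj : ∀ y ∈ W, g y = 0 → y = 0 := by
    intro y hyW hgy
    have hBy : toEuclideanLin B y = 0 := by
      have : B * (Bd * B) = B := by rw [← Matrix.mul_assoc, hB1]
      rw [← this, tE_mul, ← hg, hgy, map_zero]
    have h1 : ‖y‖ ≤ α * ‖toEuclideanLin A y‖ := hAy y (hfix y hyW)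
    have h2 : toEuclideanLin A y = toEuclideanLin (A - B) y := by
      rw [map_sub, LinearMap.sub_apply, hBy, sub_zero]
    have h3 : ‖toEuclideanLin A y‖ ≤ ε * ‖y‖ := by
      rw [h2]
      calc ‖toEuclideanLin (A - B) y‖ ≤ ‖A - B‖ * ‖y‖ := norm_tE_le _ _
      _ = ε * ‖y‖ := by rw [norm_sub_rev]
    have : ‖y‖ ≤ 0 := by nlinarith [norm_nonneg y]
    exact norm_le_zero_iff.mp this
  -- rank computations
  have hrkA : Module.finrank ℝ W = A.rank := by
    have h1 : (Ad * A).rank ≤ A.rank := Matrix.rank_mul_le_right Ad A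
    have h2 : A.rank ≤ (Ad * A).rank := by
      conv_lhs => rw [← hA1, Matrix.mul_assoc]
      exact Matrix.rank_mul_le_right A (Ad * A)
    rw [hW, ha, ← rank_tE]
    omega
  have hrkB : Module.finrank ℝ (LinearMap.range g) = B.rank := by
    have h1 : (Bd * B).rank ≤ B.rank := Matrix.rank_mul_le_right Bd B
    have h2 : B.rank ≤ (Bd * B).rank := by
      conv_lhs => rw [← hB1, Matrix.mul_assoc]
      exact Matrix.rank_mul_le_right B (Bd * B)
    rw [hg, ← rank_tE]
    omega
  -- surjectivity of g from W onto range g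
  have hmap : Submodule.map g W = LinearMap.range g := by
    apply Submodule.eq_of_le_of_finrank_eq (LinearMap.map_le_range)
    have hker : LinearMap.ker (g ∘ₗ W.subtype) = ⊥ := by
      rw [LinearMap.ker_eq_bot']
      intro ⟨y, hyW⟩ hy
      have : g y = 0 := hy
      exact Subtype.ext (hinj y hyW this)
    have hrange : LinearMap.range (g ∘ₗ W.subtype) = Submodule.map g W := by
      rw [LinearMap.range_comp, Submodule.range_subtype]
    have := LinearMap.finrank_range_add_finrank_ker (g ∘ₗ W.subtype)
    rw [hker, hrange] at this
    simp only [finrank_bot, add_zero] at this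
    rw [this, hrkA, hr, hrkB]
  -- final pointwise bound
  have hBBd : ‖B * Bd‖ ≤ 1 := by
    apply proj_norm_le _ hB3
    rw [← Matrix.mul_assoc, hB1]
  have hBdB : ‖Bd * B‖ ≤ 1 := by
    apply proj_norm_le _ hB4
    rw [← Matrix.mul_assoc, hB2]
  have hpt : ∀ u : EuclideanSpace ℝ (Fin m),
      ‖toEuclideanLin Bd u‖ ≤ (α / (1 - α * ε)) * ‖u‖ := by
    intro u
    set x := toEuclideanLin Bd u with hx
    have hxg : g x = x := by
      rw [hx, hg, ← tE_mul, hB2]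
    have hxW : x ∈ Submodule.map g W := by
      rw [hmap]; exact ⟨x, hxg⟩
    obtain ⟨y, hyW, hgy⟩ := hxW
    have hay : a y = y := hfix y hyW
    have hxy : ‖x‖ ≤ ‖y‖ := by
      have e1 : ‖x‖ = ‖toEuclideanLin (Bd * B) y‖ := by rw [← hgy]
      have e2 : ‖toEuclideanLin (Bd * B) y‖ ≤ ‖Bd * B‖ * ‖y‖ := norm_tE_le _ _
      rw [e1]
      exact le_trans e2 (mul_le_of_le_one_left (norm_nonneg y) hBdB)
    have hBy : toEuclideanLin B y = toEuclideanLin (B * Bd) u := by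
      have hBBdB : B * (Bd * B) = B := by rw [← Matrix.mul_assoc, hB1]
      calc toEuclideanLin B y = toEuclideanLin (B * (Bd * B)) y := by rw [hBBdB]
      _ = toEuclideanLin B (g y) := by rw [tE_mul]
      _ = toEuclideanLin B x := by rw [hgy]
      _ = toEuclideanLin (B * Bd) u := by rw [hx, ← tE_mul]
    have hBy_le : ‖toEuclideanLin B y‖ ≤ ‖u‖ := by
      rw [hBy]
      exact le_trans (norm_tE_le _ _) (mul_le_of_le_one_left (norm_nonneg u) hBBd)
    have h1 : ‖y‖ ≤ α * ‖toEuclideanLin A y‖ := hAy y hay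
    have h2 : ‖toEuclideanLin A y‖ ≤ ε * ‖y‖ + ‖u‖ := by
      have : toEuclideanLin A y = toEuclideanLin (A - B) y + toEuclideanLin B y := by
        rw [map_sub, LinearMap.sub_apply]; abel
      rw [this]
      calc ‖toEuclideanLin (A - B) y + toEuclideanLin B y‖
          ≤ ‖toEuclideanLin (A - B) y‖ + ‖toEuclideanLin B y‖ := norm_add_le _ _
      _ ≤ ‖A - B‖ * ‖y‖ + ‖u‖ := add_le_add (norm_tE_le _ _) hBy_le
      _ = ε * ‖y‖ + ‖u‖ := by rw [norm_sub_rev]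
    have h3 : α * ‖toEuclideanLin A y‖ ≤ α * (ε * ‖y‖ + ‖u‖) :=
      mul_le_mul_of_nonneg_left h2 hα0
    have hy_bound : (1 - α * ε) * ‖y‖ ≤ α * ‖u‖ := by ring_nf; ring_nf at h3; linarith
    have hxb : (1 - α * ε) * ‖x‖ ≤ α * ‖u‖ :=
      le_trans (mul_le_mul_of_nonneg_left hxy (le_of_lt hpos)) hy_bound
    rw [div_mul_eq_mul_div, le_div_iff₀ hpos, mul_comm ‖x‖]
    linarith
  have hnorm : ‖Bd‖ ≤ α / (1 - α * ε) :=
    opNorm_le_of Bd (div_nonneg hα0 (le_of_lt hpos)) hpt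
  calc (1 - α * ε) * ‖Bd‖ ≤ (1 - α * ε) * (α / (1 - α * ε)) := by gcongr
  _ = α := by field_simp


/-- the linear map given by the differential formula -/
def wedinL (A : Matrix (Fin m) (Fin p) ℝ) (Ad : Matrix (Fin p) (Fin m) ℝ) :
    Matrix (Fin m) (Fin p) ℝ →ₗ[ℝ] Matrix (Fin p) (Fin m) ℝ where
  toFun E := -(Ad * E * Ad) + Ad * Adᵀ * Eᵀ * (1 - A * Ad) + (1 - Ad * A) * Eᵀ * Adᵀ * Ad
  map_add' E₁ E₂ := by
    simp only [transpose_add, Matrix.mul_add, Matrix.add_mul, neg_add]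
    abel
  map_smul' c E := by
    simp only [transpose_smul, Matrix.mul_smul, Matrix.smul_mul, RingHom.id_apply, smul_add,
      smul_neg]

end PinvAux

open PinvAux Asymptotics

/-- **Differential of the Moore–Penrose inverse under a constant-rank assumption:**
if `F` is differentiable on an open set `S` and `rank (F X)` is constant on `S`, then the
Moore–Penrose inverse `F†` is differentiable and
`dF† = -F† dF F† + F† F†ᵀ dFᵀ (I - F F†) + (I - F† F) dFᵀ F†ᵀ F†`. -/
theorem pinv_fderiv {n q m p : ℕ}
    (S : Set (Matrix (Fin n) (Fin q) ℝ)) (hS : IsOpen S)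
    (F : Matrix (Fin n) (Fin q) ℝ → Matrix (Fin m) (Fin p) ℝ)
    (Fd : Matrix (Fin n) (Fin q) ℝ → Matrix (Fin p) (Fin m) ℝ)
    (hFd : ∀ X ∈ S, IsMoorePenrose (F X) (Fd X))
    (hdiff : DifferentiableOn ℝ F S)
    (hrank : ∀ X ∈ S, ∀ Y ∈ S, (F X).rank = (F Y).rank)
    (X : Matrix (Fin n) (Fin q) ℝ) (hX : X ∈ S)
    (F' : Matrix (Fin n) (Fin q) ℝ →L[ℝ] Matrix (Fin m) (Fin p) ℝ)
    (hF' : HasFDerivAt F F' X) :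
    ∃ G : Matrix (Fin n) (Fin q) ℝ →L[ℝ] Matrix (Fin p) (Fin m) ℝ,
      HasFDerivAt Fd G X ∧
        ∀ dX, G dX =
          -(Fd X * F' dX * Fd X)
            + Fd X * (Fd X)ᵀ * (F' dX)ᵀ * (1 - F X * Fd X)
            + (1 - Fd X * F X) * (F' dX)ᵀ * (Fd X)ᵀ * Fd X := by
  have hPX := hFd X hX
  set L : Matrix (Fin m) (Fin p) ℝ →ₗ[ℝ] Matrix (Fin p) (Fin m) ℝ :=
    wedinL (F X) (Fd X) with hL
  set Lc : Matrix (Fin m) (Fin p) ℝ →L[ℝ] Matrix (Fin p) (Fin m) ℝ :=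
    LinearMap.toContinuousLinearMap L with hLc
  refine ⟨Lc.comp F', ?_, fun dX => rfl⟩
  apply HasFDerivAt.of_isLittleO
  have he : (fun Y => F Y - F X - F' (Y - X)) =o[nhds X] fun Y => Y - X := hF'.isLittleO
  -- eventual facts
  have hmemS : ∀ᶠ Y in nhds X, Y ∈ S := hS.mem_nhds hX
  have hδpos : (0:ℝ) < 1 / (2 * (‖Fd X‖ + 1)) := by positivity
  have hcont : ∀ᶠ Y in nhds X, ‖F Y - F X‖ < 1 / (2 * (‖Fd X‖ + 1)) := by
    have ht : Filter.Tendsto F (nhds X) (nhds (F X)) := hF'.continuousAt.tendsto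
    have := Metric.tendsto_nhds.mp ht _ hδpos
    filter_upwards [this] with Y hY
    rwa [dist_eq_norm] at hY
  have hee : ∀ᶠ Y in nhds X, ‖F Y - F X - F' (Y - X)‖ ≤ 1 * ‖Y - X‖ := by
    have := he.def one_pos
    filter_upwards [this] with Y hY
    simpa using hY
  -- key eventual bound
  have hEv : ∀ᶠ Y in nhds X, ‖Fd Y - Fd X - (Lc.comp F') (Y - X)‖ ≤
      ((30 * ‖Fd X‖ ^ 3 + 7 * ‖Fd X‖ ^ 4 * ‖F X‖) * ((‖F'‖ + 1) * (‖F'‖ + 1)))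
        * (‖Y - X‖ * ‖Y - X‖)
      + ‖Lc‖ * ‖F Y - F X - F' (Y - X)‖ := by
    filter_upwards [hmemS, hcont, hee] with Y hYS hYd hYe
    have hPY := hFd Y hYS
    have hrk := hrank X hX Y hYS
    have hsm : ‖Fd X‖ * ‖F Y - F X‖ ≤ 1 / 2 := by
      have h1 : ‖Fd X‖ * ‖F Y - F X‖ ≤ ‖Fd X‖ * (1 / (2 * (‖Fd X‖ + 1))) :=
        mul_le_mul_of_nonneg_left (le_of_lt hYd) (norm_nonneg _)
      have h2 : ‖Fd X‖ * (1 / (2 * (‖Fd X‖ + 1))) ≤ 1 / 2 := by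
        rw [mul_one_div, div_le_div_iff₀ (by positivity) (by norm_num)]
        nlinarith [norm_nonneg (Fd X)]
      linarith
    have hb := pinv_norm_bound (F X) (F Y) (Fd X) (Fd Y) hPX hPY hrk
      (lt_of_le_of_lt hsm one_half_lt_one)
    have hBd2 : ‖Fd Y‖ ≤ 2 * ‖Fd X‖ := by
      have h3 : (1/2 : ℝ) * ‖Fd Y‖ ≤ (1 - ‖Fd X‖ * ‖F Y - F X‖) * ‖Fd Y‖ :=
        mul_le_mul_of_nonneg_right (by linarith) (norm_nonneg _)
      linarith
    have hsq := wedin_sq_bound (F X) (F Y) (Fd X) (Fd Y) hPX hPY hBd2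
    have hsplit : Fd Y - Fd X - (Lc.comp F') (Y - X)
        = (Fd Y - Fd X - L (F Y - F X)) + L (F Y - F X - F' (Y - X)) := by
      have h4 : L (F Y - F X - F' (Y - X)) = L (F Y - F X) - L (F' (Y - X)) := map_sub _ _ _
      have h5 : (Lc.comp F') (Y - X) = L (F' (Y - X)) := rfl
      rw [h4, h5]
      abel
    have hLapp : L (F Y - F X) = -(Fd X * (F Y - F X) * Fd X)
        + Fd X * (Fd X)ᵀ * (F Y - F X)ᵀ * (1 - F X * Fd X)
        + (1 - Fd X * F X) * (F Y - F X)ᵀ * (Fd X)ᵀ * Fd X := rfl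
    have hnormL : ‖L (F Y - F X - F' (Y - X))‖ ≤ ‖Lc‖ * ‖F Y - F X - F' (Y - X)‖ :=
      Lc.le_opNorm _
    have hε : ‖F Y - F X‖ ≤ (‖F'‖ + 1) * ‖Y - X‖ := by
      have h6 : F Y - F X = (F Y - F X - F' (Y - X)) + F' (Y - X) := by abel
      rw [h6]
      calc ‖(F Y - F X - F' (Y - X)) + F' (Y - X)‖
          ≤ ‖F Y - F X - F' (Y - X)‖ + ‖F' (Y - X)‖ := norm_add_le _ _
      _ ≤ 1 * ‖Y - X‖ + ‖F'‖ * ‖Y - X‖ := add_le_add hYe (F'.le_opNorm _)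
      _ = (‖F'‖ + 1) * ‖Y - X‖ := by ring
    have hε2 : ‖F Y - F X‖ * ‖F Y - F X‖
        ≤ ((‖F'‖ + 1) * (‖F'‖ + 1)) * (‖Y - X‖ * ‖Y - X‖) := by
      calc ‖F Y - F X‖ * ‖F Y - F X‖ ≤ ((‖F'‖ + 1) * ‖Y - X‖) * ((‖F'‖ + 1) * ‖Y - X‖) :=
        mul_le_mul hε hε (norm_nonneg _) (by positivity)
      _ = ((‖F'‖ + 1) * (‖F'‖ + 1)) * (‖Y - X‖ * ‖Y - X‖) := by ring
    calc ‖Fd Y - Fd X - (Lc.comp F') (Y - X)‖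
        = ‖(Fd Y - Fd X - L (F Y - F X)) + L (F Y - F X - F' (Y - X))‖ := by rw [hsplit]
    _ ≤ ‖Fd Y - Fd X - L (F Y - F X)‖ + ‖L (F Y - F X - F' (Y - X))‖ := norm_add_le _ _
    _ ≤ (30 * ‖Fd X‖ ^ 3 + 7 * ‖Fd X‖ ^ 4 * ‖F X‖) * (‖F Y - F X‖ * ‖F Y - F X‖)
          + ‖Lc‖ * ‖F Y - F X - F' (Y - X)‖ := by
        apply add_le_add _ hnormL
        rw [hLapp]
        exact hsq
    _ ≤ ((30 * ‖Fd X‖ ^ 3 + 7 * ‖Fd X‖ ^ 4 * ‖F X‖) * ((‖F'‖ + 1) * (‖F'‖ + 1)))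
          * (‖Y - X‖ * ‖Y - X‖)
        + ‖Lc‖ * ‖F Y - F X - F' (Y - X)‖ := by
        have hC0 : (0:ℝ) ≤ 30 * ‖Fd X‖ ^ 3 + 7 * ‖Fd X‖ ^ 4 * ‖F X‖ := by positivity
        have := mul_le_mul_of_nonneg_left hε2 hC0
        rw [mul_assoc]
        linarith
  -- little-o conclusion
  have hsq_lo : (fun Y => ‖Y - X‖ * ‖Y - X‖) =o[nhds X] fun Y => Y - X := by
    rw [Asymptotics.isLittleO_iff]
    intro c hc
    filter_upwards [Metric.ball_mem_nhds X hc] with Y hY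
    rw [Metric.mem_ball, dist_eq_norm] at hY
    rw [Real.norm_of_nonneg (by positivity)]
    exact mul_le_mul_of_nonneg_right (le_of_lt hY) (norm_nonneg _)
  have hcomb : (fun Y => ((30 * ‖Fd X‖ ^ 3 + 7 * ‖Fd X‖ ^ 4 * ‖F X‖)
        * ((‖F'‖ + 1) * (‖F'‖ + 1))) * (‖Y - X‖ * ‖Y - X‖)
      + ‖Lc‖ * ‖F Y - F X - F' (Y - X)‖) =o[nhds X] fun Y => Y - X :=
    (hsq_lo.const_mul_left _).add ((he.norm_left).const_mul_left _)
  refine IsBigO.trans_isLittleO ?_ hcomb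
  apply IsBigO.of_bound 1
  filter_upwards [hEv] with Y hY
  rw [one_mul, Real.norm_of_nonneg (by positivity)]
  exact hY
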